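/- Let α ∈ (0,1), let h : [0,∞) → ℝ₊ be continuous and strictly increasing with h(0) = 0, and let ν be a Borel probability measure on [0,∞) with ∫ h dν ≤ 1. Let F be the cdf of ν and F₊⁻¹(1−α) = inf{x ≥ 0 : F(x) > 1−α}. Then F₊⁻¹(1−α) ≤ h⁻¹(1/α), with equality if and only if ν = (1−α)δ₀ + α δ_{h⁻¹(1/α)} (assuming 1/α is in the range of h). -/

import Mathlib

open Set Filter Topology MeasureTheory

/-- Planner's problem: for any feasible distribution `ν` (i.e. `∫ h dν ≤ 1`),
the `(1−α)`-quantile `F₊⁻¹(1−α)` is at most `h⁻¹(1/α)`, with equality iff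
`ν = (1−α)δ₀ + α δ_{h⁻¹(1/α)}`. -/
theorem stmt11 (α : ℝ) (hα : α ∈ Set.Ioo (0:ℝ) 1)
    (h : ℝ → ℝ)
    (hhcont : ContinuousOn h (Set.Ici 0))
    (hhmono : StrictMonoOn h (Set.Ici 0))
    (hh0 : h 0 = 0)
    (hhnonneg : ∀ x ∈ Set.Ici (0:ℝ), 0 ≤ h x)
    (x₁ : ℝ) (hx₁ : 0 ≤ x₁) (hhx₁ : h x₁ = 1/α)
    (ν : MeasureTheory.Measure ℝ) [MeasureTheory.IsProbabilityMeasure ν]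
    (hsupp : ν (Set.Iio 0) = 0)
    (hint : MeasureTheory.Integrable h ν)
    (hfeas : ∫ x, h x ∂ν ≤ 1)
    (F : ℝ → ℝ) (hF : ∀ x, F x = (ν (Set.Iic x)).toReal) :
    sInf {x | 0 ≤ x ∧ 1 - α < F x} ≤ x₁ ∧
    (sInf {x | 0 ≤ x ∧ 1 - α < F x} = x₁ ↔
      ν = ENNReal.ofReal (1-α) • MeasureTheory.Measure.dirac 0
        + ENNReal.ofReal α • MeasureTheory.Measure.dirac x₁) := by
  obtain ⟨hα0, hα1⟩ := hα
  have hαinv : (0:ℝ) < 1/α := by positivity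
  have hx₁pos : 0 < x₁ := by
    rcases hx₁.lt_or_eq with h' | h'
    · exact h'
    · exfalso; rw [← h', hh0] at hhx₁; linarith
  set S := {x | 0 ≤ x ∧ 1 - α < F x} with hS
  have hbdd : BddBelow S := ⟨0, fun y hy => hy.1⟩
  -- a.e. nonnegativity
  have haex : ∀ᵐ x ∂ν, 0 ≤ x := by
    rw [ae_iff]
    convert hsupp using 2
    ext x; simp [not_le]
  have haeH : 0 ≤ᵐ[ν] h := by
    filter_upwards [haex] with x hx using hhnonneg x hx
  -- key Markov step
  have key : ∀ x, x₁ < x → 1 - α < F x := by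
    intro x hx
    have hx0 : (0:ℝ) ≤ x := le_trans hx₁ hx.le
    have hhx : 1/α < h x := hhx₁ ▸ hhmono hx₁ hx0 hx
    have hposx : 0 < h x := lt_trans hαinv hhx
    have hmark := mul_meas_ge_le_integral_of_nonneg haeH hint (h x)
    have hsub : Set.Ioi x ⊆ {y | h x ≤ h y} := by
      intro y hy
      exact (hhmono hx0 (le_trans hx0 (le_of_lt hy)) hy).le
    have h1 : (ν (Set.Ioi x)).toReal ≤ (ν {y | h x ≤ h y}).toReal :=
      ENNReal.toReal_mono (measure_ne_top ν _) (measure_mono hsub)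
    have h2 : h x * (ν (Set.Ioi x)).toReal ≤ 1 :=
      le_trans (mul_le_mul_of_nonneg_left h1 hposx.le) (le_trans hmark hfeas)
    have hαh : 1 < α * h x := by
      rw [div_lt_iff₀ hα0] at hhx; linarith [hhx]
    have h3 : (ν (Set.Ioi x)).toReal < α := by
      nlinarith [ENNReal.toReal_nonneg (a := ν (Set.Ioi x))]
    have hcompl : (ν (Set.Iic x)).toReal + (ν (Set.Ioi x)).toReal = 1 := by
      have := measure_add_measure_compl (μ := ν) (s := Set.Iic x) measurableSet_Iic
      rw [Set.compl_Iic, measure_univ] at this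
      have := congrArg ENNReal.toReal this
      rwa [ENNReal.toReal_add (measure_ne_top ν _) (measure_ne_top ν _),
        ENNReal.toReal_one] at this
    rw [hF]; linarith
  have part1 : sInf S ≤ x₁ := by
    refine le_of_forall_pos_le_add fun ε hε => ?_
    exact csInf_le hbdd ⟨by linarith, key _ (by linarith)⟩
  refine ⟨part1, ?_, ?_⟩
  · -- forward direction
    intro heq
    -- Step A: the cdf stays ≤ 1-α strictly below x₁
    have hFle : ∀ x, 0 ≤ x → x < x₁ → ν (Set.Iic x) ≤ ENNReal.ofReal (1 - α) := by
      intro x hx0 hxlt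
      by_contra hc
      push_neg at hc
      have : 1 - α < F x := by
        rw [hF]
        exact (ENNReal.ofReal_lt_iff_lt_toReal (by linarith) (measure_ne_top ν _)).mp hc
      have : sInf S ≤ x := csInf_le hbdd ⟨hx0, this⟩
      rw [heq] at this; linarith
    -- Step B: ν (Iio x₁) ≤ 1-α
    have hIio : ν (Set.Iio x₁) ≤ ENNReal.ofReal (1 - α) := by
      have hunion : Set.Iio x₁ = ⋃ n : ℕ, Set.Iic (x₁ - x₁ / (n + 1)) := by
        ext y
        simp only [Set.mem_Iio, Set.mem_iUnion, Set.mem_Iic]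
        constructor
        · intro hy
          rcases lt_or_ge y 0 with hy0 | hy0
          · exact ⟨0, by push_cast; nlinarith⟩
          · obtain ⟨n, hn⟩ := exists_nat_one_div_lt (ε := (x₁ - y) / x₁)
              (div_pos (by linarith) hx₁pos)
            refine ⟨n, ?_⟩
            have hpos : (0:ℝ) < (n:ℝ) + 1 := by positivity
            rw [div_lt_div_iff₀ hpos hx₁pos] at hn
            have : x₁ / ((n:ℝ) + 1) ≤ x₁ - y := by
              rw [div_le_iff₀ hpos]; nlinarith
            linarith
        · intro ⟨n, hn⟩
          have : (0:ℝ) < x₁ / (n + 1) := by positivity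
          linarith
      rw [hunion]
      have hmono : Monotone fun n : ℕ => Set.Iic (x₁ - x₁ / (n + 1)) := by
        intro m n hmn
        apply Set.Iic_subset_Iic.mpr
        have h2 : ((m:ℝ) + 1) ≤ (n:ℝ) + 1 := by exact_mod_cast by omega
        have : x₁ / ((n:ℝ) + 1) ≤ x₁ / ((m:ℝ) + 1) := by
          rw [div_le_div_iff₀ (by positivity) (by positivity)]; nlinarith
        linarith
      rw [hmono.measure_iUnion]
      refine iSup_le fun n => ?_
      have h1 : (0:ℝ) < x₁ / (n + 1) := by positivity
      have h2 : x₁ / ((n:ℝ) + 1) ≤ x₁ := by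
        rw [div_le_iff₀ (by positivity)]
        nlinarith
      exact hFle _ (by linarith) (by linarith)
    -- Step C: mass of [x₁, ∞) is at least α
    have hsplit : (ν (Set.Iio x₁)).toReal + (ν (Set.Ici x₁)).toReal = 1 := by
      have := measure_add_measure_compl (μ := ν) (s := Set.Iio x₁) measurableSet_Iio
      rw [Set.compl_Iio, measure_univ] at this
      have := congrArg ENNReal.toReal this
      rwa [ENNReal.toReal_add (measure_ne_top ν _) (measure_ne_top ν _),
        ENNReal.toReal_one] at this
    have hIioR : (ν (Set.Iio x₁)).toReal ≤ 1 - α := by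
      have := ENNReal.toReal_mono ENNReal.ofReal_ne_top hIio
      rwa [ENNReal.toReal_ofReal (by linarith)] at this
    have hIciR : α ≤ (ν (Set.Ici x₁)).toReal := by linarith
    -- Step D: Markov lower bound forces equality
    have hmark2 : h x₁ * (ν (Set.Ici x₁)).toReal ≤ ∫ x in Set.Ici x₁, h x ∂ν :=
      by have := setIntegral_ge_of_const_le measurableSet_Ici (measure_ne_top ν _)
            (fun x hx => hhmono.monotoneOn hx₁ (le_trans hx₁ hx) hx) hint.integrableOn
         rw [smul_eq_mul, mul_comm] at this; exact this
    have hle1 : ∫ x in Set.Ici x₁, h x ∂ν ≤ 1 :=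
      le_trans (setIntegral_le_integral hint haeH) hfeas
    have hIciEq : (ν (Set.Ici x₁)).toReal = α := by
      have : h x₁ * (ν (Set.Ici x₁)).toReal ≤ 1 := le_trans hmark2 hle1
      rw [hhx₁] at this
      have h1 : (ν (Set.Ici x₁)).toReal ≤ α := by
        rw [div_mul_eq_mul_div, one_mul, div_le_one hα0] at this
        linarith
      linarith
    have hIioEq : (ν (Set.Iio x₁)).toReal = 1 - α := by linarith
    have hIciInt : ∫ x in Set.Ici x₁, h x ∂ν = 1 := by
      have : h x₁ * (ν (Set.Ici x₁)).toReal = 1 := by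
        rw [hhx₁, hIciEq]; field_simp
      linarith [hmark2, hle1]
    -- Step E: the integral over [0, x₁) vanishes
    have htot : ∫ x, h x ∂ν = 1 := by
      have h2 : ∫ x in Set.Ici x₁, h x ∂ν ≤ ∫ x, h x ∂ν :=
        setIntegral_le_integral hint haeH
      linarith
    have hIioInt : ∫ x in Set.Iio x₁, h x ∂ν = 0 := by
      have := integral_add_compl (μ := ν) (f := h) (s := Set.Ici x₁) measurableSet_Ici hint
      rw [Set.compl_Ici, hIciInt, htot] at this
      linarith
    -- Step F: no mass on (0, x₁)
    have hIoo : ν (Set.Ioo 0 x₁) = 0 := by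
      have h0 : h =ᵐ[ν.restrict (Set.Iio x₁)] 0 :=
        (integral_eq_zero_iff_of_nonneg_ae (ae_restrict_of_ae haeH)
          hint.restrict).mp hIioInt
      have hnull : ν.restrict (Set.Iio x₁) {x | ¬ h x = 0} = 0 := by
        rw [← ae_iff]; exact h0
      have hsub : Set.Ioo 0 x₁ ⊆ {x | ¬ h x = 0} := by
        intro x hx
        have : h 0 < h x := hhmono (Set.mem_Ici.mpr (le_refl (0:ℝ))) hx.1.le hx.1
        rw [hh0] at this
        simp only [Set.mem_setOf_eq]; linarith
      have : ν.restrict (Set.Iio x₁) (Set.Ioo 0 x₁) = 0 :=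
        measure_mono_null hsub hnull
      rwa [Measure.restrict_apply measurableSet_Ioo,
        Set.inter_eq_self_of_subset_left (fun x hx => hx.2)] at this
    -- Step G: ν {0} = 1 - α
    have h0mass : ν {(0:ℝ)} = ENNReal.ofReal (1 - α) := by
      have hle : ν (Set.Iio x₁) ≤ ν {(0:ℝ)} := by
        have hsub : Set.Iio x₁ ⊆ Set.Iio 0 ∪ ({0} ∪ Set.Ioo 0 x₁) := by
          intro x hx
          rcases lt_trichotomy x 0 with h' | h' | h'
          · exact Or.inl h'
          · exact Or.inr (Or.inl h')
          · exact Or.inr (Or.inr ⟨h', hx⟩)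
        calc ν (Set.Iio x₁) ≤ ν (Set.Iio 0 ∪ ({0} ∪ Set.Ioo 0 x₁)) := measure_mono hsub
          _ ≤ ν (Set.Iio 0) + (ν {(0:ℝ)} + ν (Set.Ioo 0 x₁)) :=
              le_trans (measure_union_le _ _) (by gcongr; exact measure_union_le _ _)
          _ = ν {(0:ℝ)} := by rw [hsupp, hIoo]; simp
      have hge : ν {(0:ℝ)} ≤ ν (Set.Iio x₁) :=
        measure_mono (by simp [hx₁pos])
      have := le_antisymm hge hle
      rw [← this] at hIioEq
      rw [← hIioEq, ENNReal.ofReal_toReal (measure_ne_top ν _)]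
    -- Step H: no mass on (x₁, ∞)
    have hIoi : ν (Set.Ioi x₁) = 0 := by
      have hgint : ∫ x in Set.Ici x₁, (h x - h x₁) ∂ν = 0 := by
        rw [integral_sub hint.integrableOn (integrable_const _),
          setIntegral_const, hIciInt, smul_eq_mul, measureReal_def, hIciEq, hhx₁]
        field_simp
        norm_num
      have hgnonneg : 0 ≤ᵐ[ν.restrict (Set.Ici x₁)] fun x => h x - h x₁ := by
        refine (ae_restrict_iff' measurableSet_Ici).mpr (ae_of_all _ fun x hx => ?_)
        have := hhmono.monotoneOn hx₁ (le_trans hx₁ hx) hx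
        simp only [Pi.zero_apply]; linarith
      have h0 : (fun x => h x - h x₁) =ᵐ[ν.restrict (Set.Ici x₁)] 0 :=
        (integral_eq_zero_iff_of_nonneg_ae hgnonneg
          (hint.restrict.sub (integrable_const _))).mp hgint
      have hnull : ν.restrict (Set.Ici x₁) {x | ¬ (h x - h x₁ = 0)} = 0 := by
        rw [← ae_iff]; exact h0
      have hsub : Set.Ioi x₁ ⊆ {x | ¬ (h x - h x₁ = 0)} := by
        intro x hx
        have : h x₁ < h x := hhmono hx₁ (le_trans hx₁ (le_of_lt hx)) hx
        simp only [Set.mem_setOf_eq]; intro hc; linarith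
      have : ν.restrict (Set.Ici x₁) (Set.Ioi x₁) = 0 :=
        measure_mono_null hsub hnull
      rwa [Measure.restrict_apply measurableSet_Ioi,
        Set.inter_eq_self_of_subset_left Set.Ioi_subset_Ici_self] at this
    -- Step I: ν {x₁} = α
    have hx1mass : ν {x₁} = ENNReal.ofReal α := by
      have hle : ν (Set.Ici x₁) ≤ ν {x₁} := by
        have hsub : Set.Ici x₁ ⊆ {x₁} ∪ Set.Ioi x₁ := by
          intro x hx
          rcases eq_or_lt_of_le (Set.mem_Ici.mp hx) with h' | h'
          · exact Or.inl (by simp [h'.symm])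
          · exact Or.inr h'
        calc ν (Set.Ici x₁) ≤ ν ({x₁} ∪ Set.Ioi x₁) := measure_mono hsub
          _ ≤ ν {x₁} + ν (Set.Ioi x₁) := measure_union_le _ _
          _ = ν {x₁} := by rw [hIoi, add_zero]
      have hge : ν {x₁} ≤ ν (Set.Ici x₁) := measure_mono (by simp)
      have := le_antisymm hge hle
      rw [← this] at hIciEq
      rw [← hIciEq, ENNReal.ofReal_toReal (measure_ne_top ν _)]
    -- Step J: assemble the measure equality
    have hpairc : ν (({0, x₁} : Set ℝ)ᶜ) = 0 := by
      have hsub : (({0, x₁} : Set ℝ)ᶜ) ⊆ Set.Iio 0 ∪ Set.Ioo 0 x₁ ∪ Set.Ioi x₁ := by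
        intro x hx
        simp only [Set.mem_compl_iff, Set.mem_insert_iff, Set.mem_singleton_iff,
          not_or] at hx
        obtain ⟨hx0, hxx1⟩ := hx
        rcases lt_trichotomy x 0 with h' | h' | h'
        · exact Or.inl (Or.inl h')
        · exact absurd h' hx0
        · rcases lt_trichotomy x x₁ with h'' | h'' | h''
          · exact Or.inl (Or.inr ⟨h', h''⟩)
          · exact absurd h'' hxx1
          · exact Or.inr h''
      refine measure_mono_null hsub ?_
      refine measure_union_null (measure_union_null hsupp hIoo) hIoi
    ext s hs
    have hsdecomp : ν s = ν (s ∩ {0, x₁}) := by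
      refine le_antisymm ?_ (measure_mono Set.inter_subset_left)
      have hdiffnull : ν (s \ {0, x₁}) = 0 :=
        measure_mono_null (fun x hx => hx.2) hpairc
      calc ν s ≤ ν (s ∩ {0, x₁}) + ν (s \ {0, x₁}) := measure_le_inter_add_diff ν s _
        _ = ν (s ∩ {0, x₁}) := by rw [hdiffnull, add_zero]
    have hdirac : (ENNReal.ofReal (1-α) • MeasureTheory.Measure.dirac (0:ℝ)
        + ENNReal.ofReal α • MeasureTheory.Measure.dirac x₁) s
        = ENNReal.ofReal (1-α) * Set.indicator s 1 0
          + ENNReal.ofReal α * Set.indicator s 1 x₁ := by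
      simp [Measure.dirac_apply]
    have hx₁ne : (0:ℝ) ≠ x₁ := ne_of_lt hx₁pos
    rw [hsdecomp, hdirac]
    by_cases h0s : (0:ℝ) ∈ s <;> by_cases h1s : x₁ ∈ s
    · have : s ∩ {0, x₁} = ({0, x₁} : Set ℝ) :=
        Set.inter_eq_self_of_subset_right (by
          intro x hx
          rcases hx with h' | h'
          · rw [h']; exact h0s
          · rw [Set.mem_singleton_iff] at h'; rw [h']; exact h1s)
      rw [this, Set.indicator_of_mem h0s, Set.indicator_of_mem h1s]
      have hpair : ({0, x₁} : Set ℝ) = {0} ∪ {x₁} := rfl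
      rw [hpair, measure_union (by simp [hx₁ne]) (measurableSet_singleton _),
        h0mass, hx1mass]
      simp
    · have : s ∩ {0, x₁} = ({0} : Set ℝ) := by
        ext x
        simp only [Set.mem_inter_iff, Set.mem_insert_iff, Set.mem_singleton_iff]
        constructor
        · rintro ⟨hxs, h' | h'⟩
          · exact h'
          · exact absurd (h' ▸ hxs) h1s
        · rintro rfl; exact ⟨h0s, Or.inl rfl⟩
      rw [this, Set.indicator_of_mem h0s, Set.indicator_of_notMem h1s, h0mass]
      simp
    · have : s ∩ {0, x₁} = ({x₁} : Set ℝ) := by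
        ext x
        simp only [Set.mem_inter_iff, Set.mem_insert_iff, Set.mem_singleton_iff]
        constructor
        · rintro ⟨hxs, h' | h'⟩
          · exact absurd (h' ▸ hxs) h0s
          · exact h'
        · rintro rfl; exact ⟨h1s, Or.inr rfl⟩
      rw [this, Set.indicator_of_notMem h0s, Set.indicator_of_mem h1s, hx1mass]
      simp
    · have : s ∩ {0, x₁} = (∅ : Set ℝ) := by
        ext x
        simp only [Set.mem_inter_iff, Set.mem_insert_iff, Set.mem_singleton_iff,
          Set.mem_empty_iff_false, iff_false, not_and, not_or]
        intro hxs
        constructor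
        · rintro rfl; exact h0s hxs
        · rintro rfl; exact h1s hxs
      rw [this, Set.indicator_of_notMem h0s, Set.indicator_of_notMem h1s]
      simp
  · -- backward direction
    intro hν
    have hFx : ∀ x, 0 ≤ x → F x = if x₁ ≤ x then 1 else 1 - α := by
      intro x hx0
      rw [hF, hν]
      simp only [Measure.add_apply, Measure.smul_apply, Measure.dirac_apply,
        smul_eq_mul, Set.indicator_apply, Set.mem_Iic, Pi.one_apply]
      rw [if_pos hx0]
      by_cases hx1 : x₁ ≤ x
      · rw [if_pos hx1, if_pos hx1, mul_one, mul_one,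
          ← ENNReal.ofReal_add (by linarith) (by linarith)]
        simp
      · rw [if_neg hx1, if_neg hx1, mul_zero, add_zero, mul_one,
          ENNReal.toReal_ofReal (by linarith)]
    have hSeq : S = Set.Ici x₁ := by
      ext x
      simp only [hS, Set.mem_setOf_eq, Set.mem_Ici]
      constructor
      · rintro ⟨hx0, hxF⟩
        by_contra hlt
        push_neg at hlt
        rw [hFx x hx0, if_neg (not_le.mpr hlt)] at hxF
        linarith
      · intro hx1
        have hx0 : (0:ℝ) ≤ x := le_trans hx₁ hx1
        refine ⟨hx0, ?_⟩
        rw [hFx x hx0, if_pos hx1]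
        linarith
    rw [hSeq, csInf_Ici]
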